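/- For every integer n ≥ 2, the set H_n is finite and its cardinality equals ∏_{p ≤ n, p prime} (1 + ⌊log_p n⌋) − 1 − π(n). -/

import Mathlib

/-- `H n` is the set of composite positive integers `x` such that
`p^{v_p(x)} ≤ n` for every prime `p` dividing `x`. -/
def Hset (n : ℕ) : Set ℕ :=
  {x | 1 < x ∧ ¬ x.Prime ∧ ∀ p : ℕ, p.Prime → p ∣ x → p ^ (x.factorization p) ≤ n}

namespace HsetAux

/-- The primes up to `n`. -/
def P (n : ℕ) : Finset ℕ := Finset.filter Nat.Prime (Finset.range (n + 1))

lemma mem_P {n p : ℕ} : p ∈ P n ↔ p.Prime ∧ p ≤ n := by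
  simp [P, Finset.mem_filter, Nat.lt_succ_iff, and_comm]

/-- The auxiliary superset: all positive `x` with `p^{v_p(x)} ≤ n` for all primes `p ∣ x`. -/
def Sset (n : ℕ) : Set ℕ :=
  {x | 0 < x ∧ ∀ p : ℕ, p.Prime → p ∣ x → p ^ (x.factorization p) ≤ n}

/-- The finset of exponent choices. -/
def pis (n : ℕ) : Finset ((p : ℕ) → p ∈ P n → ℕ) :=
  (P n).pi (fun p => Finset.range (1 + Nat.log p n))

/-- The product map from exponent choices to naturals. -/
def Phi (n : ℕ) (f : (p : ℕ) → p ∈ P n → ℕ) : ℕ :=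
  ∏ p ∈ (P n).attach, p.1 ^ f p.1 p.2

lemma Phi_pos (n : ℕ) (f : (p : ℕ) → p ∈ P n → ℕ) : 0 < Phi n f := by
  apply Finset.prod_pos
  intro p _
  exact pow_pos (mem_P.mp p.2).1.pos _

lemma factorization_Phi (n : ℕ) (f : (p : ℕ) → p ∈ P n → ℕ) {q : ℕ} (hq : q ∈ P n) :
    (Phi n f).factorization q = f q hq := by
  rw [Phi, Nat.factorization_prod (fun p _ => pow_ne_zero _ (mem_P.mp p.2).1.pos.ne')]
  rw [Finset.sum_apply']
  rw [Finset.sum_eq_single (⟨q, hq⟩ : {x // x ∈ P n})]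
  · rw [(mem_P.mp hq).1.factorization_pow, Finsupp.single_eq_same]
  · intro p _ hne
    rw [(mem_P.mp p.2).1.factorization_pow, Finsupp.single_eq_of_ne]
    intro h
    exact hne (Subtype.ext h.symm)
  · intro h
    exact absurd (Finset.mem_attach _ _) h

lemma factorization_Phi_eq_zero (n : ℕ) (f : (p : ℕ) → p ∈ P n → ℕ) {q : ℕ}
    (hq : q ∉ P n) : (Phi n f).factorization q = 0 := by
  rw [Phi, Nat.factorization_prod (fun p _ => pow_ne_zero _ (mem_P.mp p.2).1.pos.ne')]
  rw [Finset.sum_apply']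
  apply Finset.sum_eq_zero
  intro p _
  rw [(mem_P.mp p.2).1.factorization_pow, Finsupp.single_eq_of_ne]
  intro h
  exact hq (h ▸ p.2)

lemma Phi_mem_Sset {n : ℕ} (hn : 2 ≤ n) {f : (p : ℕ) → p ∈ P n → ℕ} (hf : f ∈ pis n) :
    Phi n f ∈ Sset n := by
  refine ⟨Phi_pos n f, fun p hp hpd => ?_⟩
  by_cases hpP : p ∈ P n
  · rw [factorization_Phi n f hpP]
    have hfe : f p hpP < 1 + Nat.log p n := by
      have := Finset.mem_pi.mp hf p hpP
      simpa using this
    have : f p hpP ≤ Nat.log p n := Nat.lt_succ_iff.mp (by omega)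
    exact (Nat.le_log_iff_pow_le (mem_P.mp hpP).1.one_lt (by omega)).mp this
  · rw [factorization_Phi_eq_zero n f hpP]
    simp only [pow_zero]; omega

lemma Phi_injOn (n : ℕ) : Set.InjOn (Phi n) (pis n : Set _) := by
  intro f hf g hg hfg
  funext p hp
  have := congrArg (fun x => x.factorization p) hfg
  simpa [factorization_Phi n f hp, factorization_Phi n g hp] using this

lemma Sset_eq_image {n : ℕ} (hn : 2 ≤ n) :
    Sset n = ↑((pis n).image (Phi n)) := by
  ext x
  simp only [Finset.coe_image, Set.mem_image, Finset.mem_coe]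
  constructor
  · rintro ⟨hx, hcond⟩
    have hx0 : x ≠ 0 := hx.ne'
    have hsupp : x.factorization.support ⊆ P n := by
      intro p hps
      rw [Nat.support_factorization, Nat.mem_primeFactors] at hps
      obtain ⟨hp, hpd, -⟩ := hps
      have h1 : 1 ≤ x.factorization p := by
        rw [Nat.Prime.dvd_iff_one_le_factorization hp hx0] at hpd
        exact hpd
      have := hcond p hp hpd
      have hple : p ≤ n := le_trans (le_trans (Nat.le_self_pow (by omega) p)
        (Nat.pow_le_pow_right hp.pos h1)) this
      exact mem_P.mpr ⟨hp, hple⟩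
    refine ⟨fun p _ => x.factorization p, ?_, ?_⟩
    · rw [pis, Finset.mem_pi]
      intro p hp
      rw [Finset.mem_range]
      by_cases hpd : p ∣ x
      · have hprime := (mem_P.mp hp).1
        have := hcond p hprime hpd
        have := (Nat.le_log_iff_pow_le hprime.one_lt (by omega)).mpr this
        omega
      · rw [Nat.factorization_eq_zero_of_not_dvd hpd]; omega
    · have hxprod : ∏ p ∈ P n, p ^ x.factorization p = x := by
        conv_rhs => rw [← Nat.factorization_prod_pow_eq_self hx0]
        rw [Finsupp.prod]
        exact (Finset.prod_subset hsupp (fun p _ hp => by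
          rw [Finsupp.notMem_support_iff.mp hp, pow_zero])).symm
      rw [Phi, Finset.prod_attach (P n) (fun p => p ^ x.factorization p), hxprod]
  · rintro ⟨f, hf, rfl⟩
    exact Phi_mem_Sset hn hf

end HsetAux

theorem Hset_finite_card (n : ℕ) (hn : 2 ≤ n) :
    (Hset n).Finite ∧
    (Hset n).ncard =
      (∏ p ∈ Finset.filter Nat.Prime (Finset.range (n + 1)),
        (1 + ⌊Real.logb (p : ℝ) (n : ℝ)⌋₊)) - 1 - Nat.primeCounting n := by
  have hfloor : ∀ p : ℕ, ⌊Real.logb (p : ℝ) (n : ℝ)⌋₊ = Nat.log p n := by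
    intro p
    rw [← Int.floor_toNat, Real.floor_logb_natCast (Nat.cast_nonneg n), Int.log_natCast,
      Int.toNat_natCast]
  have hSfin : (HsetAux.Sset n).Finite := by
    rw [HsetAux.Sset_eq_image hn]; exact Finset.finite_toSet _
  have hScard : (HsetAux.Sset n).ncard = ∏ p ∈ HsetAux.P n, (1 + Nat.log p n) := by
    rw [HsetAux.Sset_eq_image hn, Set.ncard_coe_finset,
      Finset.card_image_of_injOn (HsetAux.Phi_injOn n), HsetAux.pis, Finset.card_pi]
    simp
  have hPcard : (HsetAux.P n).card = Nat.primeCounting n := by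
    rw [Nat.primeCounting, ← Nat.primesBelow_card_eq_primeCounting']
    rfl
  have h1P : (1 : ℕ) ∉ HsetAux.P n := by
    simp [HsetAux.mem_P, Nat.not_prime_one]
  have hEq : Hset n = HsetAux.Sset n \ ↑(insert 1 (HsetAux.P n)) := by
    ext x
    simp only [Hset, HsetAux.Sset, Set.mem_setOf_eq, Set.mem_diff, Finset.coe_insert,
      Set.mem_insert_iff, Finset.mem_coe, HsetAux.mem_P]
    constructor
    · rintro ⟨hx1, hxp, hcond⟩
      exact ⟨⟨by omega, hcond⟩, by push_neg; exact ⟨by omega, fun h => absurd h hxp⟩⟩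
    · rintro ⟨⟨hx0, hcond⟩, hnot⟩
      push_neg at hnot
      obtain ⟨hx1, hxnp⟩ := hnot
      refine ⟨by omega, fun hp => ?_, hcond⟩
      have hxn : x ≤ n := by
        have := hcond x hp dvd_rfl
        rwa [Nat.Prime.factorization_self hp, pow_one] at this
      have := hxnp hp; omega
  have hsub : ↑(insert 1 (HsetAux.P n)) ⊆ HsetAux.Sset n := by
    intro x hx
    simp only [Finset.coe_insert, Set.mem_insert_iff, Finset.mem_coe, HsetAux.mem_P] at hx
    rcases hx with rfl | ⟨hp, hpn⟩
    · exact ⟨one_pos, fun p pp hpd => absurd (Nat.dvd_one.mp hpd) pp.one_lt.ne'⟩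
    · refine ⟨hp.pos, fun q qq hqd => ?_⟩
      rw [(Nat.prime_dvd_prime_iff_eq qq hp).mp hqd, Nat.Prime.factorization_self hp, pow_one]
      exact hpn
  refine ⟨by rw [hEq]; exact hSfin.diff, ?_⟩
  rw [hEq, Set.ncard_diff hsub (Finset.finite_toSet _), Set.ncard_coe_finset,
    Finset.card_insert_of_notMem h1P, hScard, hPcard]
  have : ∏ p ∈ Finset.filter Nat.Prime (Finset.range (n + 1)),
      (1 + ⌊Real.logb (p : ℝ) (n : ℝ)⌋₊) = ∏ p ∈ HsetAux.P n, (1 + Nat.log p n) :=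
    Finset.prod_congr rfl (fun p _ => by rw [hfloor])
  rw [this]
  omega
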